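/- Let S be a spider with exactly three legs, each of length at least 2, with center vertex v, and let e_1, e_2, e_3 be the three feet of S (the edge of each leg farthest from v). In any legal rectilinear drawing of S in which the segments of e_1, e_2 and e_3 pairwise cross, there exist an edge e ∈ E(S) \ {e_1, e_2, e_3} and an index i ∈ {1,2,3} such that e and e_i share no endpoint, the open segments of e and e_i do not intersect, and e and e_i lie on different legs of S. -/

import Mathlib

open Finset

/-- The open straight-line segment drawn for the edge `e` under the drawing `f`. -/
def edgeSeg {V : Type*} (f : V → ℝ × ℝ) (e : Sym2 V) : Set (ℝ × ℝ) :=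
  Sym2.lift ⟨fun u v => openSegment ℝ (f u) (f v),
    fun u v => openSegment_symm ℝ (f u) (f v)⟩ e

/-- A legal rectilinear drawing of the graph `G`: an injective placement of the vertices in
the plane such that no edge passes through (the image of) a vertex it is not incident with,
and no three (open) edge segments pass through a common point. -/
def IsLegalDrawing {V : Type*} (G : SimpleGraph V) (f : V → ℝ × ℝ) : Prop :=
  Function.Injective f ∧
  (∀ u v x : V, G.Adj u v → x ≠ u → x ≠ v → f x ∉ openSegment ℝ (f u) (f v)) ∧
  ∀ (p : ℝ × ℝ) (e₁ e₂ e₃ : Sym2 V), e₁ ∈ G.edgeSet → e₂ ∈ G.edgeSet → e₃ ∈ G.edgeSet →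
    e₁ ≠ e₂ → e₁ ≠ e₃ → e₂ ≠ e₃ →
    ¬ (p ∈ edgeSeg f e₁ ∧ p ∈ edgeSeg f e₂ ∧ p ∈ edgeSeg f e₃)

/-- The spider with three legs of lengths `L 0, L 1, L 2` glued at a center vertex `none`:
vertex `some ⟨i, j⟩` is the vertex at distance `j + 1` from the center on leg `i`. -/
def threeLegSpider (L : Fin 3 → ℕ) : SimpleGraph (Option (Σ i : Fin 3, Fin (L i))) :=
  SimpleGraph.fromRel (fun x y =>
    (∃ (i : Fin 3) (h : 0 < L i), x = none ∧ y = some ⟨i, ⟨0, h⟩⟩) ∨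
    (∃ (i : Fin 3) (j j' : Fin (L i)), (j' : ℕ) = (j : ℕ) + 1 ∧
      x = some ⟨i, j⟩ ∧ y = some ⟨i, j'⟩))

/-- The foot of leg `i` of the spider: the edge of leg `i` farthest from the center. -/
def spiderFoot (L : Fin 3 → ℕ) (hL : ∀ i, 2 ≤ L i) (i : Fin 3) :
    Sym2 (Option (Σ i : Fin 3, Fin (L i))) :=
  s(some ⟨i, ⟨L i - 2, by have := hL i; omega⟩⟩, some ⟨i, ⟨L i - 1, by have := hL i; omega⟩⟩)

/-- The edge `e` lies on leg `i` of the spider (every non-center endpoint of `e` is a vertex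
of leg `i`; each edge of the spider lies on exactly one leg). -/
def OnLeg {L : Fin 3 → ℕ} (e : Sym2 (Option (Σ i : Fin 3, Fin (L i)))) (i : Fin 3) : Prop :=
  ∀ x ∈ e, ∀ (i' : Fin 3) (j : Fin (L i')), x = some ⟨i', j⟩ → i' = i

/-- Let `S` be a spider with exactly three legs, each of length at least `2`,
with feet `e₁, e₂, e₃`. In any legal rectilinear drawing of `S` in which the (open) segments
of the three feet pairwise cross, there exist an edge `e` of `S` other than the three feet
and an index `i` such that `e` and the foot `eᵢ` share no endpoint, their open segments do
not intersect, and `e` lies on a different leg than `eᵢ`. -/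
def cr (a b c : ℝ × ℝ) : ℝ := (b.1 - a.1) * (c.2 - a.2) - (b.2 - a.2) * (c.1 - a.1)

lemma mem_openSegment_param {p a b : ℝ × ℝ} (h : p ∈ openSegment ℝ a b) :
    ∃ θ : ℝ, 0 < θ ∧ θ < 1 ∧ p.1 = a.1 + θ * (b.1 - a.1) ∧ p.2 = a.2 + θ * (b.2 - a.2) := by
  rw [openSegment_eq_image' ℝ a b] at h
  obtain ⟨θ, ⟨h0, h1⟩, rfl⟩ := h
  refine ⟨θ, h0, h1, ?_, ?_⟩ <;> simp [Prod.smul_def, smul_eq_mul]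

lemma param_mem_openSegment {a b c : ℝ × ℝ} {q u : ℝ × ℝ} {ξ1 ξ2 ξ3 : ℝ}
    (h1 : a = q + ξ1 • u) (h2 : b = q + ξ2 • u) (h3 : c = q + ξ3 • u)
    (hlt : ξ1 < ξ2) (hlt2 : ξ2 < ξ3) : b ∈ openSegment ℝ a c := by
  rw [openSegment_eq_image' ℝ a c]
  refine ⟨(ξ2 - ξ1) / (ξ3 - ξ1), ⟨div_pos (by linarith) (by linarith),
    (div_lt_one (by linarith)).2 (by linarith)⟩, ?_⟩
  subst h1 h2 h3
  have hne : ξ3 - ξ1 ≠ 0 := by intro h; linarith [h]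
  apply Prod.ext <;> simp [Prod.smul_def, smul_eq_mul] <;> field_simp <;> ring

lemma exists_smul_of_det_zero {u w : ℝ × ℝ} (hu : u ≠ 0) (h : u.1 * w.2 - u.2 * w.1 = 0) :
    ∃ l : ℝ, w = l • u := by
  have hnz : u.1 ^ 2 + u.2 ^ 2 ≠ 0 := by
    intro h0
    have h1 : u.1 = 0 := by nlinarith [sq_nonneg u.1, sq_nonneg u.2]
    have h2 : u.2 = 0 := by nlinarith [sq_nonneg u.1, sq_nonneg u.2]
    exact hu (Prod.ext (by simp [h1]) (by simp [h2]))
  refine ⟨(w.1 * u.1 + w.2 * u.2) / (u.1 ^ 2 + u.2 ^ 2), Prod.ext ?_ ?_⟩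
  · simp only [Prod.smul_def, smul_eq_mul]
    field_simp
    linear_combination (-u.2) * h
  · simp only [Prod.smul_def, smul_eq_mul]
    field_simp
    linear_combination u.1 * h

lemma cross_core {a b c d : ℝ × ℝ} (hab : a ≠ b) (hca : c ≠ a) (hcb : c ≠ b)
    (ha : a ∉ openSegment ℝ c d) (hb : b ∉ openSegment ℝ c d) (hc : c ∉ openSegment ℝ a b)
    (hp : ∃ p, p ∈ openSegment ℝ a b ∧ p ∈ openSegment ℝ c d) :
    cr c d a * cr c d b < 0 ∧ cr c d a * cr a b c < 0 := by
  obtain ⟨p, h1, h2⟩ := hp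
  obtain ⟨t, ht0, ht1, hpa1, hpa2⟩ := mem_openSegment_param h1
  obtain ⟨s, hs0, hs1, hpc1, hpc2⟩ := mem_openSegment_param h2
  have e1 : a.1 + t * (b.1 - a.1) = c.1 + s * (d.1 - c.1) := by rw [← hpa1, ← hpc1]
  have e2 : a.2 + t * (b.2 - a.2) = c.2 + s * (d.2 - c.2) := by rw [← hpa2, ← hpc2]
  set W : ℝ := (d.1 - c.1) * (b.2 - a.2) - (d.2 - c.2) * (b.1 - a.1) with hWdef
  have hA : cr c d a = -t * W := by
    simp only [cr, hWdef]; linear_combination (d.1 - c.1) * e2 - (d.2 - c.2) * e1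
  have hB : cr c d b = (1 - t) * W := by
    simp only [cr, hWdef]; linear_combination (d.1 - c.1) * e2 - (d.2 - c.2) * e1
  have hC : cr a b c = s * W := by
    simp only [cr, hWdef]; linear_combination (b.2 - a.2) * e1 - (b.1 - a.1) * e2
  have hW : W ≠ 0 := by
    intro hW0
    -- degenerate collinear case: derive a contradiction
    have hcd : c ≠ d := by
      intro h; subst h
      rw [openSegment_same] at h2
      exact hc (h2 ▸ h1)
    set u : ℝ × ℝ := d - c with hudef
    have hu : u ≠ 0 := sub_ne_zero.2 (fun h => hcd h.symm)
    have hcp : c = p + (-s) • u := by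
      apply Prod.ext <;> simp only [Prod.smul_def, smul_eq_mul, Prod.fst_add, Prod.snd_add,
        hudef, Prod.fst_sub, Prod.snd_sub, hpc1, hpc2] <;> ring
    have hdp : d = p + (1 - s) • u := by
      apply Prod.ext <;> simp only [Prod.smul_def, smul_eq_mul, Prod.fst_add, Prod.snd_add,
        hudef, Prod.fst_sub, Prod.snd_sub, hpc1, hpc2] <;> ring
    have hdet : u.1 * (b - a).2 - u.2 * (b - a).1 = 0 := by
      simp only [hudef, Prod.fst_sub, Prod.snd_sub]
      linear_combination hW0
    obtain ⟨m, hm⟩ := exists_smul_of_det_zero hu hdet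
    have hm0 : m ≠ 0 := by
      intro h; subst h
      rw [zero_smul] at hm
      exact hab (sub_eq_zero.1 hm).symm
    have hap : a = p + (-(t * m)) • u := by
      apply Prod.ext <;>
        simp only [Prod.smul_def, smul_eq_mul, Prod.fst_add, Prod.snd_add, hpa1, hpa2] <;>
        [(have := congrArg Prod.fst hm); (have := congrArg Prod.snd hm)] <;>
        simp only [Prod.fst_sub, Prod.snd_sub, Prod.smul_def, smul_eq_mul] at this <;>
        linear_combination -t * this
    have hbp : b = p + ((1 - t) * m) • u := by
      apply Prod.ext <;>
        simp only [Prod.smul_def, smul_eq_mul, Prod.fst_add, Prod.snd_add, hpa1, hpa2] <;>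
        [(have := congrArg Prod.fst hm); (have := congrArg Prod.snd hm)] <;>
        simp only [Prod.fst_sub, Prod.snd_sub, Prod.smul_def, smul_eq_mul] at this <;>
        linear_combination (1 - t) * this
    -- helper: equal parameters force equal points
    have hparam : ∀ (x y : ℝ × ℝ) (r q : ℝ), x = p + r • u → y = p + q • u → x ≠ y → r ≠ q := by
      intro x y r q hx hy hxy h
      exact hxy (by rw [hx, hy, h])
    rcases lt_trichotomy m 0 with hmneg | hmz | hmpos
    · -- b side negative : (1-t)*m < 0 < -(t*m)
      rcases lt_or_gt_of_ne (hparam c b (-s) ((1 - t) * m) hcp hbp hcb) with hlt | hgt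
      · -- -s < (1-t)m : b between c and d
        exact hb (param_mem_openSegment hcp hbp hdp hlt (by nlinarith))
      ·
        exact hc (openSegment_symm ℝ b a ▸
          param_mem_openSegment hbp hcp hap hgt (by nlinarith))
    · exact hm0 hmz
    · -- a side negative : -(t*m) < 0 < (1-t)*m
      rcases lt_or_gt_of_ne (hparam c a (-s) (-(t * m)) hcp hap hca) with hlt | hgt
      · -- -s < -(t*m) : a between c and d
        exact ha (param_mem_openSegment hcp hap hdp hlt (by nlinarith))
      · -- -(t*m) < -s : c between a and b
        exact hc (param_mem_openSegment hap hcp hbp hgt (by nlinarith))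
  constructor
  · rw [hA, hB]
    nlinarith [sq_nonneg W, mul_pos ht0 (by linarith : (0:ℝ) < 1 - t), sq_pos_of_ne_zero hW]
  · rw [hA, hC]
    linarith [mul_pos (mul_pos ht0 hs0) (sq_pos_of_ne_zero hW),
      show -t * W * (s * W) = -(t * s * W ^ 2) by ring]

/-- vertex `t` steps from the center along leg `i` (`t = 0` is the center). -/
def svV (L : Fin 3 → ℕ) (i : Fin 3) (t : ℕ) : Option (Σ i : Fin 3, Fin (L i)) :=
  if h : 0 < t ∧ t ≤ L i then some ⟨i, ⟨t - 1, by omega⟩⟩ else none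

lemma svV_zero (L : Fin 3 → ℕ) (i : Fin 3) : svV L i 0 = none := by simp [svV]

lemma svV_pos (L : Fin 3 → ℕ) (i : Fin 3) {t : ℕ} (h1 : 0 < t) (h2 : t ≤ L i) :
    svV L i t = some ⟨i, ⟨t - 1, by omega⟩⟩ := by
  rw [svV, dif_pos ⟨h1, h2⟩]

lemma someFin_val_congr {L : Fin 3 → ℕ} {i : Fin 3} {x y : Fin (L i)} (h : (x : ℕ) = y) :
    (some ⟨i, x⟩ : Option (Σ i : Fin 3, Fin (L i))) = some ⟨i, y⟩ :=
  congrArg (fun z : Fin (L i) => (some ⟨i, z⟩ : Option (Σ i : Fin 3, Fin (L i)))) (Fin.ext h)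

lemma svV_ne_some {L : Fin 3 → ℕ} {i j : Fin 3} (h : i ≠ j) (t : ℕ) (y : Fin (L j)) :
    svV L i t ≠ some ⟨j, y⟩ := by
  rw [svV]
  split
  · intro hh
    rw [Option.some.injEq] at hh
    exact h (congrArg Sigma.fst hh)
  · exact fun hh => nomatch hh

lemma some_ne_some_val {L : Fin 3 → ℕ} {i : Fin 3} {x y : Fin (L i)} (h : (x : ℕ) ≠ (y : ℕ)) :
    (some ⟨i, x⟩ : Option (Σ i : Fin 3, Fin (L i))) ≠ some ⟨i, y⟩ := by
  intro hh
  rw [Option.some.injEq] at hh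
  injection hh with h1 h2
  exact h (congrArg Fin.val h2)

lemma svV_adj (L : Fin 3 → ℕ) (i : Fin 3) (t : ℕ) (ht : t + 1 ≤ L i) :
    (threeLegSpider L).Adj (svV L i t) (svV L i (t + 1)) := by
  rw [threeLegSpider, SimpleGraph.fromRel_adj]
  rcases Nat.eq_zero_or_pos t with rfl | htpos
  · rw [svV_zero, svV_pos L i (by omega) (by omega)]
    exact ⟨(fun hh => nomatch hh),
      Or.inl (Or.inl ⟨i, by omega, rfl, someFin_val_congr rfl⟩)⟩
  · rw [svV_pos L i htpos (by omega), svV_pos L i (by omega) ht]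
    refine ⟨some_ne_some_val ?_, Or.inl (Or.inr ⟨i, ⟨t - 1, by omega⟩, ⟨t, by omega⟩, ?_, rfl, ?_⟩)⟩
    · simp only [Fin.val_mk]
      omega
    · simp only [Fin.val_mk]
      omega
    · apply someFin_val_congr
      simp only [Fin.val_mk]
      omega

lemma some_eq_some_iff {L : Fin 3 → ℕ} {i j : Fin 3} {x : Fin (L i)} {y : Fin (L j)} :
    (some ⟨i, x⟩ : Option (Σ i : Fin 3, Fin (L i))) = some ⟨j, y⟩ ↔ i = j ∧ (x : ℕ) = (y : ℕ) := by
  constructor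
  · intro hh
    rw [Option.some.injEq] at hh
    injection hh with h1 h2
    subst h1
    first
    | exact ⟨rfl, congrArg Fin.val h2⟩
    | exact ⟨rfl, congrArg Fin.val (eq_of_heq h2)⟩
  · rintro ⟨rfl, h⟩
    exact someFin_val_congr h

def ptA (L : Fin 3 → ℕ) (hL : ∀ i, 2 ≤ L i) (i : Fin 3) : Option (Σ i : Fin 3, Fin (L i)) :=
  some ⟨i, ⟨L i - 2, by have := hL i; omega⟩⟩

def ptB (L : Fin 3 → ℕ) (hL : ∀ i, 2 ≤ L i) (i : Fin 3) : Option (Σ i : Fin 3, Fin (L i)) :=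
  some ⟨i, ⟨L i - 1, by have := hL i; omega⟩⟩

lemma spiderFoot_eq (L : Fin 3 → ℕ) (hL : ∀ i, 2 ≤ L i) (i : Fin 3) :
    spiderFoot L hL i = s(ptA L hL i, ptB L hL i) := rfl


theorem spider_three_feet_missed_crossing (L : Fin 3 → ℕ) (hL : ∀ i, 2 ≤ L i)
    (f : Option (Σ i : Fin 3, Fin (L i)) → ℝ × ℝ)
    (hf : IsLegalDrawing (threeLegSpider L) f)
    (hcross : ∀ i j : Fin 3, i ≠ j →
      (edgeSeg f (spiderFoot L hL i) ∩ edgeSeg f (spiderFoot L hL j)).Nonempty) :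
    ∃ e ∈ (threeLegSpider L).edgeSet, ∃ i : Fin 3,
      (∀ i' : Fin 3, e ≠ spiderFoot L hL i') ∧
      (∀ x, x ∈ e → x ∉ spiderFoot L hL i) ∧
      edgeSeg f e ∩ edgeSeg f (spiderFoot L hL i) = ∅ ∧
      ¬ OnLeg e i := by
  obtain ⟨hinj, hvert, -⟩ := hf
  by_contra hcon
  push_neg at hcon
  have hsvA : ∀ i, svV L i (L i - 1) = ptA L hL i := by
    intro i
    rw [svV_pos L i (by have := hL i; omega) (by omega)]
    apply someFin_val_congr
    simp only [Fin.val_mk, ptA]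
    omega
  have hsvB : ∀ i, svV L i (L i) = ptB L hL i := by
    intro i
    rw [svV_pos L i (by have := hL i; omega) (by omega)]
    apply someFin_val_congr
    simp only [Fin.val_mk, ptB]
  have hadjF : ∀ j, (threeLegSpider L).Adj (ptA L hL j) (ptB L hL j) := by
    intro j
    have h1 : L j - 1 + 1 = L j := by have := hL j; omega
    have h2 := svV_adj L j (L j - 1) (by omega)
    rw [h1, hsvA, hsvB] at h2
    exact h2
  have hAB : ∀ j, ptA L hL j ≠ ptB L hL j := by
    intro j
    apply some_ne_some_val
    simp only [Fin.val_mk]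
    have := hL j
    omega
  have hAne : ∀ {i j : Fin 3}, i ≠ j → ∀ t y, svV L i t ≠ some ⟨j, y⟩ := by
    intro i j hij t y
    exact svV_ne_some hij t y
  -- the supply of crossings along the legs
  have hX : ∀ i j : Fin 3, i ≠ j → ∀ t, t + 1 ≤ L i →
      ∃ p, p ∈ openSegment ℝ (f (svV L i t)) (f (svV L i (t + 1))) ∧
        p ∈ openSegment ℝ (f (ptA L hL j)) (f (ptB L hL j)) := by
    intro i j hij t ht
    by_cases hlast : t + 1 = L i
    · obtain ⟨p, hp1, hp2⟩ := hcross i j hij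
      have h1 : svV L i t = ptA L hL i := by rw [← hsvA i]; congr 1; omega
      have h2 : svV L i (t + 1) = ptB L hL i := by rw [← hsvB i]; congr 1
      rw [h1, h2]
      exact ⟨p, hp1, hp2⟩
    · have hadj := svV_adj L i t ht
      have hmem : s(svV L i t, svV L i (t + 1)) ∈ (threeLegSpider L).edgeSet :=
        (SimpleGraph.mem_edgeSet _).2 hadj
      have hC1 : ∀ i' : Fin 3, s(svV L i t, svV L i (t + 1)) ≠ spiderFoot L hL i' := by
        intro i' heq
        rw [spiderFoot_eq, Sym2.eq_iff] at heq
        rcases Nat.eq_zero_or_pos t with rfl | htpos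
        · rw [svV_zero] at heq
          simp only [ptA, ptB] at heq
          rcases heq with ⟨h1, -⟩ | ⟨h1, -⟩ <;> cases h1
        · rw [svV_pos L i htpos (by omega), svV_pos L i (by omega) ht] at heq
          simp only [ptA, ptB, some_eq_some_iff, Fin.val_mk] at heq
          have := hL i'
          rcases heq with ⟨⟨rfl, h1⟩, -, h2⟩ | ⟨⟨rfl, h1⟩, -, h2⟩ <;> omega
      have hC2 : ∀ x ∈ s(svV L i t, svV L i (t + 1)), x ∉ spiderFoot L hL j := by
        intro x hx hx'
        rw [spiderFoot_eq, Sym2.mem_iff] at hx'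
        rw [Sym2.mem_iff] at hx
        simp only [ptA, ptB] at hx'
        rcases hx with rfl | rfl <;> rcases hx' with h | h <;> exact svV_ne_some hij _ _ h
      rcases Set.eq_empty_or_nonempty
          (edgeSeg f s(svV L i t, svV L i (t + 1)) ∩ edgeSeg f (spiderFoot L hL j)) with
        hemp | ⟨p, hp1, hp2⟩
      · exfalso
        have honleg := hcon _ hmem j hC1 hC2 hemp
        have heq : svV L i (t + 1) = some ⟨i, ⟨t, by omega⟩⟩ := by
          rw [svV_pos L i (by omega) ht]
          apply someFin_val_congr
          simp only [Fin.val_mk]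
          omega
        exact hij (honleg (svV L i (t + 1)) (by rw [Sym2.mem_iff]; right; rfl) i ⟨t, by omega⟩ heq)
      · exact ⟨p, hp1, hp2⟩
  -- each forced crossing gives a strict sign alternation
  have hprod : ∀ i j : Fin 3, i ≠ j → ∀ t, t + 1 ≤ L i →
      cr (f (ptA L hL j)) (f (ptB L hL j)) (f (svV L i t)) *
        cr (f (ptA L hL j)) (f (ptB L hL j)) (f (svV L i (t + 1))) < 0 := by
    intro i j hij t ht
    have hadj := svV_adj L i t ht
    refine (cross_core (hinj.ne hadj.ne)
      (hinj.ne (svV_ne_some hij t _).symm)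
      (hinj.ne (svV_ne_some hij (t + 1) _).symm)
      (hvert _ _ _ (hadjF j) (svV_ne_some hij t _) (svV_ne_some hij t _))
      (hvert _ _ _ (hadjF j) (svV_ne_some hij (t + 1) _) (svV_ne_some hij (t + 1) _))
      (hvert _ _ _ hadj (svV_ne_some hij t _).symm (svV_ne_some hij (t + 1) _).symm)
      (hX i j hij t ht)).1
  have hpair : ∀ i j : Fin 3, i ≠ j →
      cr (f (ptA L hL j)) (f (ptB L hL j)) (f (ptA L hL i)) *
        cr (f (ptA L hL i)) (f (ptB L hL i)) (f (ptA L hL j)) < 0 := by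
    intro i j hij
    have hptane : ∀ {i' j' : Fin 3}, i' ≠ j' → ptA L hL i' ≠ ptA L hL j' := by
      intro i' j' h hh
      exact h (some_eq_some_iff.1 hh).1
    have hptbne : ∀ {i' j' : Fin 3}, i' ≠ j' → ptA L hL i' ≠ ptB L hL j' := by
      intro i' j' h hh
      exact h (some_eq_some_iff.1 hh).1
    refine (cross_core (hinj.ne (hAB i))
      (hinj.ne (hptane hij.symm))
      (hinj.ne (hptbne hij.symm))
      (hvert _ _ _ (hadjF j) (hptane hij) (hptbne hij))
      (hvert _ _ _ (hadjF j) (hptbne hij.symm).symm ?hbB)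
      (hvert _ _ _ (hadjF i) (hptane hij.symm) (hptbne hij.symm))
      (hcross i j hij)).2
    case hbB =>
      intro hh
      exact hij (some_eq_some_iff.1 hh).1
  set dd : Fin 3 → Option ((i : Fin 3) × Fin (L i)) → ℝ :=
    fun j x => cr (f (ptA L hL j)) (f (ptB L hL j)) (f x) with hdd
  have hDne : ∀ j i : Fin 3, i ≠ j → dd j none ≠ 0 := by
    intro j i hij
    have h0 := hprod i j hij 0 (by have := hL i; omega)
    rw [svV_zero] at h0
    exact left_ne_zero_of_mul h0.ne
  have halt : ∀ i j k : Fin 3, i ≠ j → i ≠ k → ∀ t, t ≤ L i - 1 →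
      0 < (dd j (svV L i t) * dd j none) * (dd k (svV L i t) * dd k none) := by
    intro i j k hij hik t
    induction t with
    | zero =>
      intro _
      rw [svV_zero]
      exact mul_pos (mul_self_pos.2 (hDne j i hij)) (mul_self_pos.2 (hDne k i hik))
    | succ t ih =>
      intro ht
      have ih' := ih (by omega)
      have h1 := hprod i j hij t (by have := hL i; omega)
      have h2 := hprod i k hik t (by have := hL i; omega)
      nlinarith [mul_pos ih' (mul_pos_of_neg_of_neg h1 h2),
        sq_nonneg (dd j (svV L i t) * dd k (svV L i t))]
  have h0 := halt 0 1 2 (by decide) (by decide) (L 0 - 1) le_rfl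
  have h1 := halt 1 0 2 (by decide) (by decide) (L 1 - 1) le_rfl
  have h2 := halt 2 0 1 (by decide) (by decide) (L 2 - 1) le_rfl
  rw [hsvA] at h0 h1 h2
  have n01 := hpair 0 1 (by decide)
  have n02 := hpair 0 2 (by decide)
  have n12 := hpair 1 2 (by decide)
  have hXneg := mul_neg_of_neg_of_pos n01 (mul_pos_of_neg_of_neg n02 n12)
  have hPos := mul_pos h0 (mul_pos h1 h2)
  nlinarith [hXneg, hPos, sq_nonneg (dd 0 none * dd 1 none * dd 2 none)]
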